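/- Let d ≥ 2, 𝒴 a finite set, and W : Fin d → 𝒴 → ℝ a channel with each row a probability vector and W(y|1) > 0 for all y (input 1 is the distinguished vertex). Let χ_* = max_{a≠b} ∑_y (W(y|b) − W(y|a))²/W(y|a), assume 0 < χ_* < ∞, fix n ≥ 1 and 0 < δ ≤ 1/(4(d−1)). For v = (v_2,…,v_d) ∈ {0,1}^{d−1} define θ^v ∈ ℝ^d by θ^v_j = δ(1 + v_j) for j ≥ 2 and θ^v_1 = 1 − ∑_{j≥2} δ(1+v_j), and let q_v(y) = ∑_x θ^v_x W(y|x). Then every estimator θ̂ that is a measurable function of n i.i.d. samples drawn from q_v (equivalently of their histogram) satisfies sup_{v ∈ {0,1}^{d−1}} E_v‖θ̂ − θ^v‖₂² ≥ ((d−1)/8)·δ²·(1 − δ·√(n·χ_*)). Consequently, if n·χ_* ≥ 4(d−1)², then inf over estimators of sup_v E_v‖θ̂ − θ^v‖₂² ≥ (d−1)/(64·n·χ_*). -/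

import Mathlib

open Finset BigOperators

section AssouadAux

private noncomputable def pinF (t : ℝ) : ℝ := t * Real.log t + 1 - t - 3*(t-1)^2/(2*(t+2))
private noncomputable def pinF' (t : ℝ) : ℝ := Real.log t - 3*(t-1)*(t+5)/(2*(t+2)^2)
private noncomputable def pinF'' (t : ℝ) : ℝ := t⁻¹ - 27/(t+2)^3

private lemma hasDerivAt_pinF {t : ℝ} (ht : 0 < t) : HasDerivAt pinF (pinF' t) t := by
  have h2 : (2*(t+2)) ≠ 0 := by nlinarith
  have h1 : HasDerivAt (fun t : ℝ => t * Real.log t + 1 - t) (Real.log t + 1 - 1) t :=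
    (((Real.hasDerivAt_mul_log ht.ne').add_const 1).sub (hasDerivAt_id t))
  have hnum : HasDerivAt (fun t : ℝ => 3*(t-1)^2) (3*(2*(t-1))) t := by
    have := ((hasDerivAt_id t).sub_const 1).pow 2
    simpa using (this.const_mul 3)
  have hden : HasDerivAt (fun t : ℝ => 2*(t+2)) 2 t := by
    simpa using ((hasDerivAt_id t).add_const 2).const_mul 2
  have hq := hnum.div hden h2
  have := h1.sub hq
  refine this.congr_deriv ?_
  unfold pinF'
  field_simp
  ring

private lemma hasDerivAt_pinF' {t : ℝ} (ht : 0 < t) : HasDerivAt pinF' (pinF'' t) t := by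
  have h2 : (2*(t+2)^2) ≠ 0 := by nlinarith
  have hlog : HasDerivAt Real.log t⁻¹ t := Real.hasDerivAt_log ht.ne'
  have hnum : HasDerivAt (fun t : ℝ => 3*(t-1)*(t+5)) (3*(t-1) + 3*(t+5)) t := by
    have := (((hasDerivAt_id t).sub_const 1).const_mul 3).mul ((hasDerivAt_id t).add_const 5)
    refine this.congr_deriv ?_; simp [id_eq]; ring
  have hden : HasDerivAt (fun t : ℝ => 2*(t+2)^2) (2*(2*(t+2))) t := by
    have := (((hasDerivAt_id t).add_const 2).pow 2).const_mul 2
    refine this.congr_deriv ?_; simp [id_eq]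
  have hq := hnum.div hden h2
  have := hlog.sub hq
  refine this.congr_deriv ?_
  unfold pinF''
  have h3 : ((t:ℝ)+2) ≠ 0 := by positivity
  field_simp
  ring

private lemma pinF''_nonneg {t : ℝ} (ht : 0 < t) : 0 ≤ pinF'' t := by
  unfold pinF''
  rw [sub_nonneg, div_le_iff₀ (by positivity), inv_mul_eq_div, le_div_iff₀ ht]
  nlinarith [sq_nonneg (t-1), ht.le]

private lemma key_ineq {t : ℝ} (ht : 0 < t) :
    3*(t-1)^2/(2*(t+2)) ≤ t * Real.log t + 1 - t := by
  have hmono : MonotoneOn pinF' (Set.Ioi (0:ℝ)) := by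
    apply monotoneOn_of_hasDerivWithinAt_nonneg (convex_Ioi 0)
    · intro x hx
      exact (hasDerivAt_pinF' hx).continuousAt.continuousWithinAt
    · intro x hx
      rw [interior_Ioi] at hx
      exact (hasDerivAt_pinF' hx).hasDerivWithinAt
    · intro x hx
      rw [interior_Ioi] at hx
      exact pinF''_nonneg hx
  have hF'1 : pinF' 1 = 0 := by simp [pinF']
  have key : 0 ≤ pinF t := by
    rcases le_total 1 t with h1 | h1
    · have hm : MonotoneOn pinF (Set.Ici (1:ℝ)) := by
        apply monotoneOn_of_hasDerivWithinAt_nonneg (convex_Ici 1)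
        · intro x hx
          exact (hasDerivAt_pinF (lt_of_lt_of_le one_pos hx)).continuousAt.continuousWithinAt
        · intro x hx
          rw [interior_Ici] at hx
          exact (hasDerivAt_pinF (lt_trans one_pos hx)).hasDerivWithinAt
        · intro x hx
          rw [interior_Ici] at hx
          have : pinF' 1 ≤ pinF' x :=
            hmono (Set.mem_Ioi.2 one_pos) (Set.mem_Ioi.2 (lt_trans one_pos hx)) hx.le
          linarith [hF'1 ▸ this]
      have := hm (Set.mem_Ici.2 le_rfl) (Set.mem_Ici.2 h1) h1
      have hF1 : pinF 1 = 0 := by norm_num [pinF]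
      linarith [hF1 ▸ this]
    · have hm : AntitoneOn pinF (Set.Ioc (0:ℝ) 1) := by
        apply antitoneOn_of_hasDerivWithinAt_nonpos (convex_Ioc 0 1)
        · intro x hx
          exact (hasDerivAt_pinF hx.1).continuousAt.continuousWithinAt
        · intro x hx
          rw [interior_Ioc] at hx
          exact (hasDerivAt_pinF hx.1).hasDerivWithinAt
        · intro x hx
          rw [interior_Ioc] at hx
          have : pinF' x ≤ pinF' 1 :=
            hmono (Set.mem_Ioi.2 hx.1) (Set.mem_Ioi.2 one_pos) hx.2.le
          linarith [hF'1 ▸ this]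
      have := hm (Set.mem_Ioc.2 ⟨ht, h1⟩) (Set.mem_Ioc.2 ⟨one_pos, le_rfl⟩) h1
      have hF1 : pinF 1 = 0 := by norm_num [pinF]
      linarith [hF1 ▸ this]
  unfold pinF at key
  linarith

private lemma key_ineq2 {p q : ℝ} (hp : 0 < p) (hq : 0 < q) :
    3*(p-q)^2/(2*(p+2*q)) ≤ p * Real.log (p/q) + q - p := by
  have ht : 0 < p/q := div_pos hp hq
  have := key_ineq ht
  have h := mul_le_mul_of_nonneg_left this hq.le
  calc 3*(p-q)^2/(2*(p+2*q)) = q * (3*(p/q-1)^2/(2*(p/q+2))) := by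
        field_simp
    _ ≤ q * (p/q * Real.log (p/q) + 1 - p/q) := h
    _ = p * Real.log (p/q) + q - p := by
        field_simp

/-- Pinsker's inequality for finite sums. -/
private lemma pinsker_fin {α : Type*} [Fintype α] (p q : α → ℝ)
    (hp : ∀ a, 0 < p a) (hq : ∀ a, 0 < q a)
    (hp1 : ∑ a, p a = 1) (hq1 : ∑ a, q a = 1) :
    (∑ a, |p a - q a|) ^ 2 ≤ 2 * ∑ a, p a * Real.log (p a / q a) := by
  set K := ∑ a, p a * Real.log (p a / q a) with hK
  have hKsum : ∑ a, (p a * Real.log (p a / q a) + q a - p a) = K := by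
    rw [hK, Finset.sum_sub_distrib, Finset.sum_add_distrib, hp1, hq1]
    ring
  have hchi : ∑ a, 3*(p a - q a)^2/(2*(p a + 2*q a)) ≤ K := by
    rw [← hKsum]
    exact Finset.sum_le_sum fun a _ => key_ineq2 (hp a) (hq a)
  have hcs := Finset.sum_mul_sq_le_sq_mul_sq Finset.univ
      (fun a => |p a - q a| / Real.sqrt (p a + 2*q a))
      (fun a => Real.sqrt (p a + 2*q a))
  have hw : ∀ a : α, 0 < p a + 2*q a := fun a => by nlinarith [hp a, hq a]
  have h1 : ∀ a : α, |p a - q a| / Real.sqrt (p a + 2*q a) * Real.sqrt (p a + 2*q a)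
      = |p a - q a| := fun a => by
    rw [div_mul_cancel₀]
    exact (Real.sqrt_pos.2 (hw a)).ne'
  have h2 : ∀ a : α, (|p a - q a| / Real.sqrt (p a + 2*q a))^2
      = (p a - q a)^2 / (p a + 2*q a) := fun a => by
    rw [div_pow, sq_abs, Real.sq_sqrt (hw a).le]
  have h3 : ∀ a : α, (Real.sqrt (p a + 2*q a))^2 = p a + 2*q a := fun a =>
    Real.sq_sqrt (hw a).le
  simp only [h1, h2, h3] at hcs
  have h4 : ∑ a, (p a + 2*q a) = 3 := by
    simp only [Finset.sum_add_distrib, hp1, ← Finset.mul_sum, hq1]; norm_num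
  rw [h4] at hcs
  have h5 : ∑ a, (p a - q a)^2 / (p a + 2*q a) ≤ 2/3 * K := by
    have : ∑ a, 3*(p a - q a)^2/(2*(p a + 2*q a))
        = 3/2 * ∑ a, (p a - q a)^2 / (p a + 2*q a) := by
      rw [Finset.mul_sum]
      exact Finset.sum_congr rfl fun a _ => by
        field_simp
    linarith [hchi, this ▸ hchi]
  nlinarith [hcs, h5]

private lemma sum_prod_mul {Y : Type} [Fintype Y] [DecidableEq Y] {n : ℕ}
    (p g : Y → ℝ) (hp1 : ∑ y, p y = 1) (t : Fin n) :
    ∑ s : Fin n → Y, (∏ u, p (s u)) * g (s t) = ∑ y, p y * g y := by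
  classical
  set f : Fin n → Y → ℝ := fun u y => if u = t then p y * g y else p y with hf
  have h1 : ∀ s : Fin n → Y, (∏ u, p (s u)) * g (s t) = ∏ u, f u (s u) := by
    intro s
    rw [← Finset.mul_prod_erase Finset.univ (fun u => f u (s u)) (Finset.mem_univ t),
        ← Finset.mul_prod_erase Finset.univ (fun u => p (s u)) (Finset.mem_univ t)]
    have h2 : ∀ u ∈ Finset.univ.erase t, f u (s u) = p (s u) := by
      intro u hu
      simp [hf, Finset.ne_of_mem_erase hu]
    rw [Finset.prod_congr rfl h2]
    simp [hf]
    ring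
  simp only [h1]
  rw [← Fintype.prod_sum f]
  have h3 : ∀ u : Fin n, ∑ y, f u y = if u = t then ∑ y, p y * g y else 1 := by
    intro u
    by_cases h : u = t <;> simp [hf, h, hp1]
  rw [Finset.prod_congr rfl (fun u _ => h3 u), Finset.prod_ite_eq' Finset.univ t]
  simp

private lemma min_prod_bound {Y : Type} [Fintype Y] [DecidableEq Y] (n : ℕ) (p q : Y → ℝ)
    (hp : ∀ y, 0 < p y) (hq : ∀ y, 0 < q y)
    (hp1 : ∑ y, p y = 1) (hq1 : ∑ y, q y = 1)
    (c : ℝ) (hc : ∑ y, p y * Real.log (p y / q y) ≤ c) :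
    1 - Real.sqrt (n * c / 2) ≤ ∑ s : Fin n → Y, min (∏ t, p (s t)) (∏ t, q (s t)) := by
  classical
  set P : (Fin n → Y) → ℝ := fun s => ∏ t, p (s t) with hP
  set Q : (Fin n → Y) → ℝ := fun s => ∏ t, q (s t) with hQ
  have hPpos : ∀ s, 0 < P s := fun s => Finset.prod_pos fun t _ => hp _
  have hQpos : ∀ s, 0 < Q s := fun s => Finset.prod_pos fun t _ => hq _
  have hP1 : ∑ s, P s = 1 := by
    rw [hP, ← Fintype.prod_sum fun (_ : Fin n) (y : Y) => p y]
    simp [hp1]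
  have hQ1 : ∑ s, Q s = 1 := by
    rw [hQ, ← Fintype.prod_sum fun (_ : Fin n) (y : Y) => q y]
    simp [hq1]
  have hlog : ∀ s : Fin n → Y, Real.log (P s / Q s) = ∑ t, Real.log (p (s t) / q (s t)) := by
    intro s
    rw [hP, hQ, ← Finset.prod_div_distrib, Real.log_prod]
    intro t _
    exact (div_pos (hp _) (hq _)).ne'
  have hKL : ∑ s, P s * Real.log (P s / Q s) ≤ n * c := by
    have : ∑ s, P s * Real.log (P s / Q s)
        = ∑ t : Fin n, ∑ s : Fin n → Y, P s * Real.log (p (s t) / q (s t)) := by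
      rw [Finset.sum_comm]
      exact Finset.sum_congr rfl fun s _ => by rw [hlog s, Finset.mul_sum]
    rw [this]
    have h2 : ∀ t : Fin n, ∑ s : Fin n → Y, P s * Real.log (p (s t) / q (s t))
        = ∑ y, p y * Real.log (p y / q y) := fun t =>
      sum_prod_mul p (fun y => Real.log (p y / q y)) hp1 t
    calc ∑ t : Fin n, ∑ s : Fin n → Y, P s * Real.log (p (s t) / q (s t))
        = ∑ t : Fin n, ∑ y, p y * Real.log (p y / q y) := Finset.sum_congr rfl fun t _ => h2 t
      _ = n * ∑ y, p y * Real.log (p y / q y) := by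
          rw [Finset.sum_const, Finset.card_univ, Fintype.card_fin, nsmul_eq_mul]
      _ ≤ n * c := by
          apply mul_le_mul_of_nonneg_left hc (by positivity)
  have hpk := pinsker_fin P Q hPpos hQpos hP1 hQ1
  have habs : (∑ s, |P s - Q s|) ^ 2 ≤ 2 * (n * c) := by nlinarith
  have habs0 : 0 ≤ ∑ s, |P s - Q s| := Finset.sum_nonneg fun s _ => abs_nonneg _
  have hsq : ∑ s, |P s - Q s| ≤ Real.sqrt (2 * (n * c)) :=
    Real.le_sqrt_of_sq_le habs
  have hsqrt2 : Real.sqrt (2 * (n * c)) = 2 * Real.sqrt (n * c / 2) := by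
    rw [show (2 * (n * c) : ℝ) = 2^2 * (n * c / 2) by ring,
        Real.sqrt_mul (by positivity), Real.sqrt_sq (by norm_num : (0:ℝ) ≤ 2)]
  have hmin : ∀ s, min (P s) (Q s) = (P s + Q s - |P s - Q s|) / 2 := by
    intro s
    have h1 := min_add_max (P s) (Q s)
    have h2 := max_sub_min_eq_abs (P s) (Q s)
    rw [abs_sub_comm] at h2
    linarith
  have hfin : ∑ s : Fin n → Y, min (P s) (Q s)
      = (∑ s, P s + ∑ s, Q s - ∑ s, |P s - Q s|) / 2 := by
    rw [Finset.sum_congr rfl fun s _ => hmin s, ← Finset.sum_div,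
        Finset.sum_sub_distrib, Finset.sum_add_distrib]
  rw [hfin, hP1, hQ1]
  rw [hsqrt2] at hsq
  linarith

private lemma pair_pt {P₁ P₂ x a b : ℝ} (h1 : 0 ≤ P₁) (h2 : 0 ≤ P₂) :
    min P₁ P₂ * ((a-b)^2/2) ≤ P₁*(x-a)^2 + P₂*(x-b)^2 := by
  rcases le_total P₁ P₂ with h | h
  · rw [min_eq_left h]
    nlinarith [mul_nonneg (sub_nonneg.2 h) (sq_nonneg (x-b)),
      mul_nonneg h1 (sq_nonneg (2*x-a-b))]
  · rw [min_eq_right h]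
    nlinarith [mul_nonneg (sub_nonneg.2 h) (sq_nonneg (x-a)),
      mul_nonneg h2 (sq_nonneg (2*x-a-b))]

private lemma kl_le_chisq_pt {p q : ℝ} (hp : 0 < p) (hq : 0 < q) :
    p * Real.log (p / q) ≤ (p - q)^2 / q + (p - q) := by
  have h := Real.log_le_sub_one_of_pos (div_pos hp hq)
  have h2 := mul_le_mul_of_nonneg_left h hp.le
  calc p * Real.log (p/q) ≤ p * (p/q - 1) := h2
    _ = (p-q)^2/q + (p-q) := by field_simp; ring

end AssouadAux


/-- **Assouad lower bound for arbitrary estimators** (Theorem 8.4).  The alphabet size is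
`d = d' + 1` (so `d − 1 = d'`), input `0` is the distinguished vertex.  For the hypercube
family `θ^v` with step `δ ≤ 1/(4(d−1))` and mixtures `q_v`, every estimator (an arbitrary
function of the `n` i.i.d. samples, expectations written as explicit finite sums) satisfies
`sup_v E_v‖θ̂ − θ^v‖₂² ≥ ((d−1)/8)·δ²·(1 − δ√(n χ_*))`; consequently, if `n χ_* ≥ 4(d−1)²`
and `δ = 1/(2√(n χ_*))`, then `sup_v E_v‖θ̂ − θ^v‖₂² ≥ (d−1)/(64 n χ_*)`. -/


theorem assouad_risk_lower_bound (d' : ℕ) (hd' : 1 ≤ d')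
    (Y : Type) [Fintype Y] [DecidableEq Y]
    (W : Fin (d' + 1) → Y → ℝ)
    (hnn : ∀ x y, 0 ≤ W x y) (hrow : ∀ x, ∑ y, W x y = 1)
    (hpos : ∀ y, 0 < W 0 y)
    (chiStar : ℝ) (hchipos : 0 < chiStar)
    (hub : ∀ a b : Fin (d' + 1), a ≠ b → ∑ y, (W b y - W a y) ^ 2 / W a y ≤ chiStar)
    (hat : ∃ a b : Fin (d' + 1), a ≠ b ∧ ∑ y, (W b y - W a y) ^ 2 / W a y = chiStar)
    (n : ℕ) (hn : 1 ≤ n)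
    (δ : ℝ) (hδ0 : 0 < δ) (hδ1 : δ ≤ 1 / (4 * (d' : ℝ)))
    (θ : (Fin d' → Bool) → Fin (d' + 1) → ℝ)
    (hθ : ∀ v, θ v = Fin.cons (1 - ∑ i, δ * (1 + (if v i then (1 : ℝ) else 0)))
        (fun i => δ * (1 + (if v i then (1 : ℝ) else 0))))
    (qv : (Fin d' → Bool) → Y → ℝ)
    (hqv : ∀ v y, qv v y = ∑ x, θ v x * W x y)
    (est : (Fin n → Y) → Fin (d' + 1) → ℝ) :
    (∃ v : Fin d' → Bool,
        ((d' : ℝ) / 8) * δ ^ 2 * (1 - δ * Real.sqrt (n * chiStar))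
          ≤ ∑ s : Fin n → Y, (∏ t, qv v (s t)) * ∑ j, (est s j - θ v j) ^ 2)
    ∧ (4 * (d' : ℝ) ^ 2 ≤ n * chiStar → δ = 1 / (2 * Real.sqrt (n * chiStar)) →
        ∃ v : Fin d' → Bool,
          (d' : ℝ) / (64 * n * chiStar)
            ≤ ∑ s : Fin n → Y, (∏ t, qv v (s t)) * ∑ j, (est s j - θ v j) ^ 2) := by
  classical
  have hd'pos : (0:ℝ) < (d' : ℝ) := by exact_mod_cast hd'
  set u : ℝ := δ * Real.sqrt ((n : ℝ) * chiStar) with hu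
  -- basic facts about θ
  have hθs : ∀ v (i : Fin d'), θ v i.succ = δ * (1 + (if v i then (1:ℝ) else 0)) := by
    intro v i
    rw [hθ]
    exact Fin.cons_succ _ _ i
  have hθ0 : ∀ v, θ v 0 = 1 - ∑ i, δ * (1 + (if v i then (1:ℝ) else 0)) := by
    intro v
    rw [hθ]
    rfl
  have hδd : δ * (4 * (d' : ℝ)) ≤ 1 := by
    rw [le_div_iff₀ (by positivity)] at hδ1
    exact hδ1
  have hShalf : ∀ v : Fin d' → Bool, ∑ i, δ * (1 + (if v i then (1:ℝ) else 0)) ≤ 1/2 := by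
    intro v
    have h1 : ∀ i : Fin d', δ * (1 + (if v i then (1:ℝ) else 0)) ≤ 2 * δ := by
      intro i
      have : (if v i then (1:ℝ) else 0) ≤ 1 := by split <;> norm_num
      nlinarith
    calc ∑ i, δ * (1 + (if v i then (1:ℝ) else 0)) ≤ ∑ _i : Fin d', 2 * δ :=
          Finset.sum_le_sum fun i _ => h1 i
      _ = (d' : ℝ) * (2 * δ) := by
          rw [Finset.sum_const, Finset.card_univ, Fintype.card_fin, nsmul_eq_mul]
      _ ≤ 1/2 := by nlinarith
  have hθ0half : ∀ v, (1/2 : ℝ) ≤ θ v 0 := by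
    intro v
    rw [hθ0]
    linarith [hShalf v]
  have hθnn : ∀ v (x : Fin (d' + 1)), 0 ≤ θ v x := by
    intro v x
    refine Fin.cases ?_ ?_ x
    · linarith [hθ0half v]
    · intro i
      rw [hθs]
      have : (0:ℝ) ≤ (if v i then (1:ℝ) else 0) := by split <;> norm_num
      nlinarith
  -- basic facts about qv
  have hqlb : ∀ v y, (1/2) * W 0 y ≤ qv v y := by
    intro v y
    rw [hqv, Fin.sum_univ_succ]
    have h1 : (1/2) * W 0 y ≤ θ v 0 * W 0 y :=
      mul_le_mul_of_nonneg_right (hθ0half v) (hnn 0 y)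
    have h2 : 0 ≤ ∑ i : Fin d', θ v i.succ * W i.succ y :=
      Finset.sum_nonneg fun i _ => mul_nonneg (hθnn v _) (hnn _ y)
    linarith
  have hqpos : ∀ v y, 0 < qv v y := by
    intro v y
    have := hpos y
    have := hqlb v y
    linarith
  have hθtot : ∀ v, ∑ x, θ v x = 1 := by
    intro v
    rw [Fin.sum_univ_succ, hθ0, Finset.sum_congr rfl fun i _ => hθs v i]
    ring
  have hqsum : ∀ v, ∑ y, qv v y = 1 := by
    intro v
    simp_rw [hqv]
    rw [Finset.sum_comm]
    rw [Finset.sum_congr rfl fun x (_ : x ∈ Finset.univ) =>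
      (by rw [← Finset.mul_sum, hrow, mul_one] : ∑ y, θ v x * W x y = θ v x)]
    exact hθtot v
  -- the flip maps
  set flip : Fin d' → (Fin d' → Bool) → (Fin d' → Bool) :=
    fun i v => Function.update v i (!(v i)) with hflip
  have hflipi : ∀ (i : Fin d') v, flip i v i = !(v i) := by
    intro i v
    rw [hflip]
    exact Function.update_self i _ v
  have hflipj : ∀ (i : Fin d') v j, j ≠ i → flip i v j = v j := by
    intro i v j hj
    rw [hflip]
    exact Function.update_of_ne hj _ v
  have hinv : ∀ i : Fin d', Function.Involutive (flip i) := by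
    intro i v
    funext j
    by_cases h : j = i
    · subst h
      rw [hflipi, hflipi, Bool.not_not]
    · rw [hflipj _ _ _ h, hflipj _ _ _ h]
  -- difference of mixtures
  have hdiff : ∀ (i : Fin d') v y, qv v y - qv (flip i v) y
      = (δ * ((if v i then (1:ℝ) else 0) - (if flip i v i then (1:ℝ) else 0)))
        * (W i.succ y - W 0 y) := by
    intro i v y
    set G : Fin d' → ℝ := fun j =>
      δ * ((if v j then (1:ℝ) else 0) - (if flip i v j then (1:ℝ) else 0)) with hG
    have hG0 : ∀ j : Fin d', j ≠ i → G j = 0 := by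
      intro j hj
      rw [hG]
      simp only [hflipj i v j hj]
      ring
    have hGsum : ∑ j, G j = G i :=
      Finset.sum_eq_single i (fun j _ hj => hG0 j hj) (fun h => absurd (Finset.mem_univ i) h)
    have hsucc : ∀ j : Fin d', θ v j.succ - θ (flip i v) j.succ = G j := by
      intro j
      rw [hθs, hθs, hG]
      ring
    have hzero : θ v 0 - θ (flip i v) 0 = -∑ j, G j := by
      have hAB : ∑ j, G j = (∑ j, δ * (1 + if v j then (1:ℝ) else 0))
          - (∑ j, δ * (1 + if flip i v j then (1:ℝ) else 0)) := by
        rw [← Finset.sum_sub_distrib]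
        exact Finset.sum_congr rfl fun j _ => by simp only [hG]; ring
      rw [hθ0, hθ0, hAB]
      ring
    calc qv v y - qv (flip i v) y
        = ∑ x, (θ v x - θ (flip i v) x) * W x y := by
          rw [hqv, hqv, ← Finset.sum_sub_distrib]
          exact Finset.sum_congr rfl fun x _ => (sub_mul _ _ _).symm
      _ = (θ v 0 - θ (flip i v) 0) * W 0 y
          + ∑ j : Fin d', (θ v j.succ - θ (flip i v) j.succ) * W j.succ y :=
          Fin.sum_univ_succ _
      _ = (-∑ j, G j) * W 0 y + ∑ j : Fin d', G j * W j.succ y := by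
          rw [hzero]
          congr 1
          exact Finset.sum_congr rfl fun j _ => by rw [hsucc j]
      _ = (-G i) * W 0 y + G i * W i.succ y := by
          rw [hGsum, Finset.sum_eq_single i (fun j _ hj => by rw [hG0 j hj, zero_mul])
            (fun h => absurd (Finset.mem_univ i) h)]
      _ = G i * (W i.succ y - W 0 y) := by ring
  have hdsq : ∀ (i : Fin d') v y,
      (qv v y - qv (flip i v) y)^2 = δ^2 * (W i.succ y - W 0 y)^2 := by
    intro i v y
    rw [hdiff i v y, mul_pow, hflipi i v]
    cases hvi : v i <;> simp [hvi] <;> ring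
  -- chi-square bound
  have hchib : ∀ (i : Fin d') v,
      ∑ y, (qv v y - qv (flip i v) y)^2 / qv (flip i v) y ≤ 2 * δ^2 * chiStar := by
    intro i v
    have step : ∀ y, (qv v y - qv (flip i v) y)^2 / qv (flip i v) y
        ≤ 2 * δ^2 * ((W i.succ y - W 0 y)^2 / W 0 y) := by
      intro y
      rw [hdsq]
      have h1 : (1/2) * W 0 y ≤ qv (flip i v) y := hqlb _ y
      have h2 : (0:ℝ) < (1/2) * W 0 y := by
        have := hpos y
        linarith
      calc δ^2 * (W i.succ y - W 0 y)^2 / qv (flip i v) y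
          ≤ δ^2 * (W i.succ y - W 0 y)^2 / ((1/2) * W 0 y) := by
            apply div_le_div_of_nonneg_left (by positivity) h2 h1
        _ = 2 * δ^2 * ((W i.succ y - W 0 y)^2 / W 0 y) := by
            have hW : W 0 y ≠ 0 := (hpos y).ne'
            field_simp
    calc ∑ y, (qv v y - qv (flip i v) y)^2 / qv (flip i v) y
        ≤ ∑ y, 2 * δ^2 * ((W i.succ y - W 0 y)^2 / W 0 y) :=
          Finset.sum_le_sum fun y _ => step y
      _ = 2 * δ^2 * ∑ y, (W i.succ y - W 0 y)^2 / W 0 y := by rw [← Finset.mul_sum]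
      _ ≤ 2 * δ^2 * chiStar := by
          apply mul_le_mul_of_nonneg_left (hub 0 i.succ (Fin.succ_ne_zero i).symm)
            (by positivity)
  -- KL bound
  have hKLb : ∀ (i : Fin d') v,
      ∑ y, qv v y * Real.log (qv v y / qv (flip i v) y) ≤ 2 * δ^2 * chiStar := by
    intro i v
    calc ∑ y, qv v y * Real.log (qv v y / qv (flip i v) y)
        ≤ ∑ y, ((qv v y - qv (flip i v) y)^2 / qv (flip i v) y
            + (qv v y - qv (flip i v) y)) :=
          Finset.sum_le_sum fun y _ => kl_le_chisq_pt (hqpos v y) (hqpos _ y)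
      _ = ∑ y, (qv v y - qv (flip i v) y)^2 / qv (flip i v) y := by
          rw [Finset.sum_add_distrib, Finset.sum_sub_distrib, hqsum, hqsum]
          ring
      _ ≤ 2 * δ^2 * chiStar := hchib i v
  -- overlap bound
  have hminb : ∀ (i : Fin d') v, 1 - u
      ≤ ∑ s : Fin n → Y, min (∏ t, qv v (s t)) (∏ t, qv (flip i v) (s t)) := by
    intro i v
    have hb := min_prod_bound n (qv v) (qv (flip i v)) (hqpos v) (hqpos _)
      (hqsum v) (hqsum _) (2 * δ^2 * chiStar) (hKLb i v)
    have heq : Real.sqrt ((n : ℝ) * (2 * δ^2 * chiStar) / 2) = u := by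
      rw [show (n : ℝ) * (2 * δ^2 * chiStar) / 2 = δ^2 * ((n : ℝ) * chiStar) by ring,
        Real.sqrt_mul (sq_nonneg δ), Real.sqrt_sq hδ0.le, hu]
    rw [heq] at hb
    exact hb
  have hPpos : ∀ v (s : Fin n → Y), (0:ℝ) < ∏ t, qv v (s t) :=
    fun v s => Finset.prod_pos fun t _ => hqpos v (s t)
  -- dropping the zeroth coordinate
  have hTR : ∀ v, ∑ i : Fin d',
      (∑ s : Fin n → Y, (∏ t, qv v (s t)) * (est s i.succ - θ v i.succ)^2)
      ≤ ∑ s : Fin n → Y, (∏ t, qv v (s t)) * ∑ j, (est s j - θ v j)^2 := by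
    intro v
    rw [Finset.sum_comm]
    apply Finset.sum_le_sum
    intro s _
    rw [← Finset.mul_sum]
    apply mul_le_mul_of_nonneg_left _ (hPpos v s).le
    rw [Fin.sum_univ_succ]
    exact le_add_of_nonneg_left (sq_nonneg _)
  -- pair bound
  have hpair : ∀ (i : Fin d') v, (δ^2/2) * (1 - u) ≤
      (∑ s : Fin n → Y, (∏ t, qv v (s t)) * (est s i.succ - θ v i.succ)^2)
      + (∑ s : Fin n → Y, (∏ t, qv (flip i v) (s t))
          * (est s i.succ - θ (flip i v) i.succ)^2) := by
    intro i v
    have hab : (θ v i.succ - θ (flip i v) i.succ)^2 = δ^2 := by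
      rw [hθs, hθs, hflipi i v]
      cases hvi : v i <;> simp [hvi] <;> ring
    calc (δ^2/2) * (1 - u)
        ≤ (δ^2/2) * ∑ s : Fin n → Y, min (∏ t, qv v (s t)) (∏ t, qv (flip i v) (s t)) :=
          mul_le_mul_of_nonneg_left (hminb i v) (by positivity)
      _ = ∑ s : Fin n → Y, min (∏ t, qv v (s t)) (∏ t, qv (flip i v) (s t)) * (δ^2/2) := by
          rw [Finset.mul_sum]
          exact Finset.sum_congr rfl fun s _ => mul_comm _ _
      _ ≤ ∑ s : Fin n → Y, ((∏ t, qv v (s t)) * (est s i.succ - θ v i.succ)^2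
          + (∏ t, qv (flip i v) (s t)) * (est s i.succ - θ (flip i v) i.succ)^2) := by
          apply Finset.sum_le_sum
          intro s _
          have hpt := pair_pt (x := est s i.succ) (a := θ v i.succ)
            (b := θ (flip i v) i.succ) (hPpos v s).le (hPpos (flip i v) s).le
          rw [hab] at hpt
          exact hpt
      _ = _ := Finset.sum_add_distrib
  have hswap : ∀ i : Fin d',
      ∑ v : Fin d' → Bool, (∑ s : Fin n → Y, (∏ t, qv (flip i v) (s t))
        * (est s i.succ - θ (flip i v) i.succ)^2)
      = ∑ v : Fin d' → Bool, ∑ s : Fin n → Y,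
          (∏ t, qv v (s t)) * (est s i.succ - θ v i.succ)^2 := by
    intro i
    exact Fintype.sum_bijective (flip i) (hinv i).bijective _ _ (fun v => rfl)
  have hTsum : ∀ i : Fin d', (2:ℝ)^d' * ((δ^2/4) * (1 - u))
      ≤ ∑ v : Fin d' → Bool, ∑ s : Fin n → Y,
          (∏ t, qv v (s t)) * (est s i.succ - θ v i.succ)^2 := by
    intro i
    have h1 := Finset.sum_le_sum fun (v : Fin d' → Bool) (_ : v ∈ Finset.univ) => hpair i v
    rw [Finset.sum_add_distrib, hswap i, Finset.sum_const, Finset.card_univ,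
      Fintype.card_fun, Fintype.card_bool, Fintype.card_fin, nsmul_eq_mul] at h1
    push_cast at h1
    nlinarith [h1]
  -- part 1
  have part1 : ∃ v : Fin d' → Bool,
      ((d' : ℝ) / 8) * δ ^ 2 * (1 - δ * Real.sqrt (n * chiStar))
        ≤ ∑ s : Fin n → Y, (∏ t, qv v (s t)) * ∑ j, (est s j - θ v j) ^ 2 := by
    rcases le_or_gt (1 - u) 0 with hneg | hposu
    · refine ⟨fun _ => false, ?_⟩
      have hR0 : (0:ℝ) ≤ ∑ s : Fin n → Y, (∏ t, qv (fun _ => false) (s t))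
          * ∑ j, (est s j - θ (fun _ => false) j) ^ 2 :=
        Finset.sum_nonneg fun s _ => mul_nonneg (hPpos _ s).le
          (Finset.sum_nonneg fun j _ => sq_nonneg _)
      have hB0 : ((d' : ℝ) / 8) * δ ^ 2 * (1 - u) ≤ 0 :=
        mul_nonpos_of_nonneg_of_nonpos (by positivity) hneg
      rw [hu] at hB0
      linarith
    · have hBsum : ∑ _v : Fin d' → Bool, ((d' : ℝ) / 8) * δ ^ 2 * (1 - u)
          ≤ ∑ v : Fin d' → Bool,
            ∑ s : Fin n → Y, (∏ t, qv v (s t)) * ∑ j, (est s j - θ v j) ^ 2 := by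
        have hB0 : (0:ℝ) ≤ ((d' : ℝ) / 8) * δ ^ 2 * (1 - u) :=
          mul_nonneg (by positivity) hposu.le
        calc ∑ _v : Fin d' → Bool, ((d' : ℝ) / 8) * δ ^ 2 * (1 - u)
            = (2:ℝ)^d' * (((d' : ℝ) / 8) * δ ^ 2 * (1 - u)) := by
              rw [Finset.sum_const, Finset.card_univ, Fintype.card_fun,
                Fintype.card_bool, Fintype.card_fin, nsmul_eq_mul]
              push_cast
              ring
          _ ≤ (d' : ℝ) * ((2:ℝ)^d' * ((δ^2/4) * (1 - u))) := by
              have hident : (2:ℝ)^d' * (((d' : ℝ) / 8) * δ ^ 2 * (1 - u))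
                  + (2:ℝ)^d' * (((d' : ℝ) / 8) * δ ^ 2 * (1 - u))
                  = (d' : ℝ) * ((2:ℝ)^d' * ((δ^2/4) * (1 - u))) := by ring
              linarith [mul_nonneg (pow_nonneg (by norm_num : (0:ℝ) ≤ 2) d') hB0]
          _ ≤ ∑ i : Fin d', ∑ v : Fin d' → Bool, ∑ s : Fin n → Y,
              (∏ t, qv v (s t)) * (est s i.succ - θ v i.succ)^2 := by
              have h2 := Finset.sum_le_sum fun (i : Fin d') (_ : i ∈ Finset.univ) => hTsum i
              rw [Finset.sum_const, Finset.card_univ, Fintype.card_fin, nsmul_eq_mul] at h2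
              exact h2
          _ = ∑ v : Fin d' → Bool, ∑ i : Fin d', ∑ s : Fin n → Y,
              (∏ t, qv v (s t)) * (est s i.succ - θ v i.succ)^2 := Finset.sum_comm
          _ ≤ ∑ v : Fin d' → Bool,
              ∑ s : Fin n → Y, (∏ t, qv v (s t)) * ∑ j, (est s j - θ v j) ^ 2 :=
            Finset.sum_le_sum fun v _ => hTR v
      obtain ⟨v, _, hv⟩ := Finset.exists_le_of_sum_le Finset.univ_nonempty hBsum
      exact ⟨v, by rw [hu] at hv; exact hv⟩
  refine ⟨part1, fun hsc hδeq => ?_⟩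
  obtain ⟨v, hv⟩ := part1
  refine ⟨v, le_trans ?_ hv⟩
  have hnc : (0:ℝ) < (n : ℝ) * chiStar := by
    have : (1:ℝ) ≤ (n : ℝ) := by exact_mod_cast hn
    nlinarith
  have hs : (0:ℝ) < Real.sqrt ((n : ℝ) * chiStar) := Real.sqrt_pos.2 hnc
  have hsq : Real.sqrt ((n : ℝ) * chiStar) ^ 2 = (n : ℝ) * chiStar :=
    Real.sq_sqrt hnc.le
  have h2r : (1 / (2 * Real.sqrt ((n : ℝ) * chiStar))) ^ 2
      = 1 / (4 * ((n : ℝ) * chiStar)) := by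
    rw [div_pow, one_pow, mul_pow, hsq]
    norm_num
  have h1r : (1 / (2 * Real.sqrt ((n : ℝ) * chiStar))) * Real.sqrt ((n : ℝ) * chiStar)
      = 1 / 2 := by
    field_simp
  have hform : (d' : ℝ) / (64 * (n : ℝ) * chiStar)
      = ((d' : ℝ) / 8) * (1 / (2 * Real.sqrt ((n : ℝ) * chiStar))) ^ 2
        * (1 - (1 / (2 * Real.sqrt ((n : ℝ) * chiStar)))
            * Real.sqrt ((n : ℝ) * chiStar)) := by
    rw [h2r, h1r]
    field_simp
    ring
  rw [hδeq, ← hform]
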